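/- Let V be a 2-dimensional real inner product space with orthonormal basis (e₁, e₂), and let A : V → V be the self-adjoint linear map with A e₁ = λ e₁ and A e₂ = ν e₂. Fix r > 0, φ ∈ ℝ, α = (2/r)·sin φ, and assume λν = ((λ+ν)/2)·α − 1/r². Then the vectors v⁺ = cos φ · e₁ + (rλ − sin φ) · e₂ and v⁻ = −cos φ · e₁ + (rλ − sin φ) · e₂ are null for the quadratic form of A − (α/2)·I, i.e. ⟨(A − (α/2)·I) v⁺, v⁺⟩ = 0 and ⟨(A − (α/2)·I) v⁻, v⁻⟩ = 0. -/

import Mathlib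

open RealInnerProductSpace

/-- Let `V` be a 2-dimensional real inner product space with orthonormal basis
`(e₁, e₂)`, and `A : V → V` the self-adjoint linear map with `A e₁ = λ e₁`,
`A e₂ = ν e₂`.  Fix `r > 0`, `φ ∈ ℝ`, `α = (2/r)·sin φ`, and assume
`λν = ((λ+ν)/2)·α − 1/r²`.  Then `v⁺ = cos φ · e₁ + (rλ − sin φ) · e₂` and
`v⁻ = −cos φ · e₁ + (rλ − sin φ) · e₂` are null for the quadratic form of
`A − (α/2)·I`. -/
theorem characteristic_vectors_null {V : Type*} [NormedAddCommGroup V]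
    [InnerProductSpace ℝ V] [FiniteDimensional ℝ V]
    (hdim : Module.finrank ℝ V = 2)
    (e₁ e₂ : V) (he₁ : ‖e₁‖ = 1) (he₂ : ‖e₂‖ = 1) (he₁₂ : ⟪e₁, e₂⟫ = 0)
    (A : V →ₗ[ℝ] V) (hA : A.IsSymmetric)
    (r φ l v : ℝ) (hr : 0 < r)
    (hAe₁ : A e₁ = l • e₁) (hAe₂ : A e₂ = v • e₂)
    (hlv : l * v = ((l + v) / 2) * ((2 / r) * Real.sin φ) - 1 / r ^ 2) :
    ⟪(A - (((2 / r) * Real.sin φ) / 2) • (LinearMap.id : V →ₗ[ℝ] V))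
        (Real.cos φ • e₁ + (r * l - Real.sin φ) • e₂),
      Real.cos φ • e₁ + (r * l - Real.sin φ) • e₂⟫ = 0 ∧
    ⟪(A - (((2 / r) * Real.sin φ) / 2) • (LinearMap.id : V →ₗ[ℝ] V))
        ((-Real.cos φ) • e₁ + (r * l - Real.sin φ) • e₂),
      (-Real.cos φ) • e₁ + (r * l - Real.sin φ) • e₂⟫ = 0 := by
  have h11 : ⟪e₁, e₁⟫ = (1 : ℝ) := by
    rw [real_inner_self_eq_norm_sq, he₁]; norm_num
  have h22 : ⟪e₂, e₂⟫ = (1 : ℝ) := by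
    rw [real_inner_self_eq_norm_sq, he₂]; norm_num
  have h21 : ⟪e₂, e₁⟫ = (0 : ℝ) := by
    rw [real_inner_comm]; exact he₁₂
  set c : ℝ := ((2 / r) * Real.sin φ) / 2 with hc
  have key : ∀ a b : ℝ,
      ⟪(A - c • (LinearMap.id : V →ₗ[ℝ] V)) (a • e₁ + b • e₂),
        a • e₁ + b • e₂⟫ = (l - c) * a ^ 2 + (v - c) * b ^ 2 := by
    intro a b
    have : (A - c • (LinearMap.id : V →ₗ[ℝ] V)) (a • e₁ + b • e₂)
        = (a * (l - c)) • e₁ + (b * (v - c)) • e₂ := by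
      simp only [LinearMap.sub_apply, map_add, map_smul, hAe₁, hAe₂, LinearMap.smul_apply,
        LinearMap.id_apply]
      module
    rw [this]
    simp only [inner_add_left, inner_add_right, real_inner_smul_left, real_inner_smul_right,
      h11, h22, he₁₂, h21]
    ring
  have hr' : r ≠ 0 := ne_of_gt hr
  have hsc : Real.sin φ ^ 2 + Real.cos φ ^ 2 = 1 := Real.sin_sq_add_cos_sq φ
  have scalar : ∀ a : ℝ, a ^ 2 = Real.cos φ ^ 2 →
      (l - c) * a ^ 2 + (v - c) * (r * l - Real.sin φ) ^ 2 = 0 := by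
    intro a ha
    have h2r : (2 : ℝ) * r ≠ 0 := by positivity
    have hlv2 : l * v * r ^ 2 = (l + v) * Real.sin φ * r - 1 := by
      refine mul_left_cancel₀ h2r ?_
      field_simp at hlv
      linear_combination (2 * r) * hlv
    rw [ha, hc]
    field_simp
    linear_combination (r * l - Real.sin φ) * hlv2 + (r * l - Real.sin φ) * hsc
  constructor
  · rw [key]; exact scalar _ rfl
  · rw [key]; exact scalar _ (by ring)
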